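/- Let Q ∈ ℝ^{p×p} be symmetric positive definite, q ∈ ℝ^p, 𝐰 ∈ ℝ^p, μ ≥ 0, and let ŵ minimize J(w) = ½(w−𝐰)ᵀQ(w−𝐰) − qᵀ(w−𝐰) + μ‖w‖₁. Then ‖Q^{1/2}(ŵ − 𝐰)‖₂ ≤ (p^{1/2}·μ + ‖q‖₂)/λ_min(Q)^{1/2}. -/

import Mathlib

open Matrix

/-- Smallest eigenvalue of a symmetric matrix, as the infimum of the Rayleigh quotient
over the unit sphere. -/
noncomputable def lambdaMin {ι : Type*} [Fintype ι] (A : Matrix ι ι ℝ) : ℝ :=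
  sInf {r | ∃ v : ι → ℝ, (∑ i, v i ^ 2) = 1 ∧ r = v ⬝ᵥ A.mulVec v}

/-- Largest eigenvalue of a symmetric matrix, as the supremum of the Rayleigh quotient
over the unit sphere. -/
noncomputable def lambdaMax {ι : Type*} [Fintype ι] (A : Matrix ι ι ℝ) : ℝ :=
  sSup {r | ∃ v : ι → ℝ, (∑ i, v i ^ 2) = 1 ∧ r = v ⬝ᵥ A.mulVec v}

/-- The `ℓ²` operator norm (largest singular value) of a matrix. -/
noncomputable def opNorm {ι : Type*} [Fintype ι] (A : Matrix ι ι ℝ) : ℝ :=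
  sSup {r | ∃ v : ι → ℝ, (∑ i, v i ^ 2) = 1 ∧ r = Real.sqrt (∑ i, (A.mulVec v i) ^ 2)}

/-- The euclidean (`ℓ²`) norm of a vector. -/
noncomputable def norm2 {ι : Type*} [Fintype ι] (v : ι → ℝ) : ℝ :=
  Real.sqrt (∑ i, v i ^ 2)

/-- The `ℓ¹` norm of a vector. -/
noncomputable def norm1 {ι : Type*} [Fintype ι] (v : ι → ℝ) : ℝ :=
  ∑ i, |v i|

lemma my_norm2_nonneg {ι : Type*} [Fintype ι] (v : ι → ℝ) : 0 ≤ norm2 v := Real.sqrt_nonneg _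

lemma my_norm2_sq {ι : Type*} [Fintype ι] (v : ι → ℝ) : norm2 v ^ 2 = ∑ i, v i ^ 2 :=
  Real.sq_sqrt (Finset.sum_nonneg fun _ _ => sq_nonneg _)

lemma my_dot_le_norm2 {ι : Type*} [Fintype ι] (f g : ι → ℝ) : f ⬝ᵥ g ≤ norm2 f * norm2 g := by
  have h := Finset.sum_mul_sq_le_sq_mul_sq Finset.univ f g
  have h2 : f ⬝ᵥ g ≤ |f ⬝ᵥ g| := le_abs_self _
  refine h2.trans ?_
  rw [← Real.sqrt_sq_eq_abs, norm2, norm2,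
    ← Real.sqrt_mul (Finset.sum_nonneg fun _ _ => sq_nonneg _)]
  exact Real.sqrt_le_sqrt (by simpa [dotProduct] using h)

lemma my_norm1_le {p : ℕ} (v : Fin p → ℝ) : norm1 v ≤ Real.sqrt p * norm2 v := by
  have h := Finset.sum_mul_sq_le_sq_mul_sq Finset.univ (fun _ : Fin p => (1:ℝ)) (fun i => |v i|)
  simp only [one_mul, one_pow, Finset.sum_const, Finset.card_univ, Fintype.card_fin,
    nsmul_eq_mul, sq_abs] at h
  have h1 : norm1 v = |norm1 v| := (abs_of_nonneg (Finset.sum_nonneg fun _ _ => abs_nonneg _)).symm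
  rw [norm1] at *
  rw [h1, ← Real.sqrt_sq_eq_abs, norm2, ← Real.sqrt_mul (Nat.cast_nonneg p)]
  exact Real.sqrt_le_sqrt (by linarith)

lemma my_lambdaMin_pos {p : ℕ} (hp : 0 < p) (Q : Matrix (Fin p) (Fin p) ℝ) (hQ : Q.PosDef) :
    0 < lambdaMin Q := by
  set g : (Fin p → ℝ) → ℝ := fun v => v ⬝ᵥ Q.mulVec v with hg
  set K : Set (Fin p → ℝ) := {v | ∑ i, v i ^ 2 = 1} with hK
  have hgc : Continuous g := by
    simp only [hg, Matrix.mulVec, dotProduct]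
    exact continuous_finset_sum _ fun i _ => (continuous_apply i).mul
      (continuous_finset_sum _ fun j _ => continuous_const.mul (continuous_apply j))
  have hKcl : IsClosed K := by
    have : Continuous fun v : Fin p → ℝ => ∑ i, v i ^ 2 :=
      continuous_finset_sum _ fun i _ => (continuous_apply i).pow 2
    exact isClosed_singleton.preimage this
  have hKsub : K ⊆ Metric.closedBall 0 1 := by
    intro v hv
    simp only [Metric.mem_closedBall, dist_zero_right]
    rw [pi_norm_le_iff_of_nonneg zero_le_one]
    intro i
    have h1 : v i ^ 2 ≤ 1 := by
      rw [← hv]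
      exact Finset.single_le_sum (fun j _ => sq_nonneg (v j)) (Finset.mem_univ i)
    rw [Real.norm_eq_abs]
    nlinarith [abs_nonneg (v i), sq_abs (v i)]
  have hKc : IsCompact K := (isCompact_closedBall (0:Fin p → ℝ) 1).of_isClosed_subset hKcl hKsub
  have hKne : K.Nonempty := by
    refine ⟨fun i => if i = ⟨0, hp⟩ then 1 else 0, ?_⟩
    have : ∀ i : Fin p, (if i = (⟨0, hp⟩ : Fin p) then (1:ℝ) else 0) ^ 2
        = if i = ⟨0, hp⟩ then 1 else 0 := by intro i; split <;> norm_num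
    simp only [hK, Set.mem_setOf_eq]
    rw [Finset.sum_congr rfl fun i _ => this i, Finset.sum_ite_eq' Finset.univ]
    simp
  have hset : {r | ∃ v : Fin p → ℝ, (∑ i, v i ^ 2) = 1 ∧ r = v ⬝ᵥ Q.mulVec v} = g '' K := by
    ext r
    constructor
    · rintro ⟨v, hv, rfl⟩; exact ⟨v, hv, rfl⟩
    · rintro ⟨v, hv, rfl⟩; exact ⟨v, hv, rfl⟩
  obtain ⟨v₀, hv₀, hgv₀⟩ := (hKc.image hgc).sInf_mem (hKne.image g)
  rw [lambdaMin, hset, ← hgv₀]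
  have hv₀ne : v₀ ≠ 0 := by
    intro h
    rw [hK, Set.mem_setOf_eq, h] at hv₀
    simp at hv₀
  have := hQ.dotProduct_mulVec_pos hv₀ne
  simpa [g] using this

set_option maxHeartbeats 1000000 in
/-- Error bound for the Lasso-type minimizer in the `Q`-metric:
`‖Q^{1/2}(ŵ − 𝐰)‖₂ ≤ (√p·μ + ‖q‖₂)/λ_min(Q)^{1/2}`. -/
theorem stmt_7 {p : ℕ} (Q : Matrix (Fin p) (Fin p) ℝ) (hQ : Q.PosDef)
    (q w wh : Fin p → ℝ) (μ : ℝ) (hμ : 0 ≤ μ)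
    (hmin : ∀ v : Fin p → ℝ,
      (1 / 2) * ((wh - w) ⬝ᵥ Q.mulVec (wh - w)) - q ⬝ᵥ (wh - w) + μ * norm1 wh ≤
      (1 / 2) * ((v - w) ⬝ᵥ Q.mulVec (v - w)) - q ⬝ᵥ (v - w) + μ * norm1 v) :
    norm2 ((hQ.posSemidef.isHermitian.cfc Real.sqrt).mulVec (wh - w)) ≤
      (Real.sqrt p * μ + norm2 q) / Real.sqrt (lambdaMin Q) := by
  set u : Fin p → ℝ := wh - w with hu
  set R := hQ.posSemidef.isHermitian.cfc Real.sqrt with hR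
  set a : ℝ := u ⬝ᵥ Q.mulVec u with ha
  set C : ℝ := Real.sqrt p * μ + norm2 q with hC
  have hC0 : 0 ≤ C := by
    have := my_norm2_nonneg q
    have := Real.sqrt_nonneg (p:ℝ)
    positivity
  -- `norm2 (R *ᵥ u) ^ 2 = a`
  have hRsq : norm2 (R.mulVec u) ^ 2 = a := by
    rw [my_norm2_sq]
    have h1 : ∑ i, (R.mulVec u) i ^ 2 = (R.mulVec u) ⬝ᵥ (R.mulVec u) := by
      simp [dotProduct, sq]
    rw [h1, Matrix.dotProduct_mulVec]
    have hRc : R = cfc Real.sqrt Q := (hQ.posSemidef.isHermitian.cfc_eq _).symm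
    have hsym : Rᵀ = R := by
      have : IsSelfAdjoint R := by rw [hRc]; exact cfc_predicate _ _
      have h2 : Rᴴ = R := this
      simpa [conjTranspose_eq_transpose_of_trivial] using h2
    have hRR : R * R = Q := by
      rw [hRc, ← cfc_mul Real.sqrt Real.sqrt Q]
      conv_rhs => rw [← cfc_id' ℝ Q (ha := hQ.posSemidef.isHermitian)]
      apply cfc_congr
      intro x hx
      rw [hQ.posSemidef.isHermitian.spectrum_real_eq_range_eigenvalues] at hx
      obtain ⟨i, rfl⟩ := hx
      exact Real.mul_self_sqrt (hQ.posSemidef.eigenvalues_nonneg i)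
    have h2 : (R.mulVec u) ᵥ* R = R.mulVec (R.mulVec u) := by
      nth_rewrite 2 [← hsym]
      exact Matrix.vecMul_transpose R (R.mulVec u)
    rw [h2, Matrix.mulVec_mulVec, hRR, ha, dotProduct_comm]
  -- a is nonnegative
  have ha0 : 0 ≤ a := by
    have := hQ.posSemidef.dotProduct_mulVec_nonneg u
    simpa [ha] using this
  -- the key inequality via minimality along the segment
  set B : ℝ := q ⬝ᵥ u + μ * (norm1 w - norm1 wh) with hB
  have key : ∀ t : ℝ, 0 ≤ t → t < 1 → (1 + t) / 2 * a ≤ B := by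
    intro t ht0 ht1
    have h1 := hmin (w + t • u)
    have e1 : (w + t • u) - w = t • u := add_sub_cancel_left w (t • u)
    rw [e1] at h1
    have e2 : (t • u) ⬝ᵥ Q.mulVec (t • u) = t ^ 2 * a := by
      rw [Matrix.mulVec_smul, smul_dotProduct, dotProduct_smul]
      simp [smul_eq_mul, ha]; ring
    have e3 : q ⬝ᵥ (t • u) = t * (q ⬝ᵥ u) := by
      rw [dotProduct_smul]; simp [smul_eq_mul]
    have e4 : norm1 (w + t • u) ≤ (1 - t) * norm1 w + t * norm1 wh := by
      rw [norm1]
      have : ∀ i : Fin p, |(w + t • u) i| ≤ (1 - t) * |w i| + t * |wh i| := by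
        intro i
        have hwi : (w + t • u) i = (1 - t) * w i + t * wh i := by
          simp [hu, Pi.add_apply, Pi.smul_apply, Pi.sub_apply, smul_eq_mul]; ring
        rw [hwi]
        calc |(1 - t) * w i + t * wh i| ≤ |(1 - t) * w i| + |t * wh i| := abs_add_le _ _
          _ = (1 - t) * |w i| + t * |wh i| := by
              rw [abs_mul, abs_mul, abs_of_nonneg (by linarith : (0:ℝ) ≤ 1 - t),
                abs_of_nonneg ht0]
      calc ∑ i, |(w + t • u) i| ≤ ∑ i, ((1 - t) * |w i| + t * |wh i|) :=
            Finset.sum_le_sum fun i _ => this i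
        _ = (1 - t) * norm1 w + t * norm1 wh := by
            rw [Finset.sum_add_distrib, ← Finset.mul_sum, ← Finset.mul_sum, norm1, norm1]
    rw [e2, e3] at h1
    have e5 : μ * norm1 (w + t • u) ≤ μ * ((1 - t) * norm1 w + t * norm1 wh) :=
      mul_le_mul_of_nonneg_left e4 hμ
    have h2 : (1 - t) * ((1 + t) / 2 * a) ≤ (1 - t) * B := by
      rw [hB]; nlinarith [h1, e5]
    exact le_of_mul_le_mul_left h2 (by linarith : (0:ℝ) < 1 - t)
  -- a ≤ B
  have haB : a ≤ B := by
    by_contra hcon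
    push_neg at hcon
    have h0 := key 0 le_rfl one_pos
    have hapos : 0 < a := by nlinarith
    set m : ℝ := max (2 * B / a - 1) 0 with hm
    have hm0 : 0 ≤ m := le_max_right _ _
    have hm1 : m < 1 := by
      apply max_lt _ one_pos
      rw [sub_lt_iff_lt_add]
      rw [div_lt_iff₀ hapos]
      nlinarith
    have hmB : 2 * B / a - 1 ≤ m := le_max_left _ _
    set t : ℝ := (m + 1) / 2 with htdef
    have ht := key t (by linarith) (by rw [htdef]; linarith)
    have htm : 2 * B / a - 1 < t := by rw [htdef]; linarith
    have : 2 * B < (t + 1) * a := by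
      have := (div_lt_iff₀ hapos).mp (by linarith : 2 * B / a < t + 1)
      linarith
    nlinarith [ht]
  -- bound B by C * norm2 u
  set c : ℝ := norm2 u with hc
  have hc0 : 0 ≤ c := my_norm2_nonneg u
  have hBC : B ≤ C * c := by
    have h1 : q ⬝ᵥ u ≤ norm2 q * c := my_dot_le_norm2 q u
    have h2 : norm1 w - norm1 wh ≤ norm1 u := by
      rw [norm1, norm1, norm1, ← Finset.sum_sub_distrib]
      refine Finset.sum_le_sum fun i _ => ?_
      have : u i = w i - wh i ∨ u i = -(w i - wh i) := Or.inr (by simp [hu])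
      calc |w i| - |wh i| ≤ |w i - wh i| := abs_sub_abs_le_abs_sub _ _
        _ = |u i| := by rw [abs_sub_comm]; simp [hu]
    have h3 : norm1 u ≤ Real.sqrt p * c := my_norm1_le u
    have h4 : μ * (norm1 w - norm1 wh) ≤ μ * (Real.sqrt p * c) :=
      mul_le_mul_of_nonneg_left (h2.trans h3) hμ
    rw [hB, hC]; nlinarith
  -- case u = 0
  by_cases hu0 : u = 0
  · have : norm2 (R.mulVec u) = 0 := by
      rw [hu0]
      simp [norm2, Matrix.mulVec_zero]
    rw [this]
    exact div_nonneg hC0 (Real.sqrt_nonneg _)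
  -- u ≠ 0, so p > 0 and norm2 u > 0
  have hp : 0 < p := by
    rcases Nat.eq_zero_or_pos p with h | h
    · exfalso; apply hu0; subst h; ext i; exact absurd i.2 (by simp)
    · exact h
  have hcpos : 0 < c := by
    rw [hc, norm2, Real.sqrt_pos]
    obtain ⟨i, hi⟩ := Function.ne_iff.mp hu0
    exact Finset.sum_pos' (fun j _ => sq_nonneg _) ⟨i, Finset.mem_univ i, by have := abs_pos.mpr hi; nlinarith [sq_abs (u i)]⟩
  -- lambdaMin bound
  set L : ℝ := lambdaMin Q with hL
  have hLpos : 0 < L := my_lambdaMin_pos hp Q hQ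
  have hLa : L * c ^ 2 ≤ a := by
    have hbdd : BddBelow {r | ∃ v : Fin p → ℝ, (∑ i, v i ^ 2) = 1 ∧ r = v ⬝ᵥ Q.mulVec v} := by
      refine ⟨0, fun r hr => ?_⟩
      obtain ⟨v, -, rfl⟩ := hr
      have := hQ.posSemidef.dotProduct_mulVec_nonneg v
      simpa using this
    have hmem : c⁻¹ ^ 2 * a ∈
        {r | ∃ v : Fin p → ℝ, (∑ i, v i ^ 2) = 1 ∧ r = v ⬝ᵥ Q.mulVec v} := by
      refine ⟨c⁻¹ • u, ?_, ?_⟩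
      · have hcsq : c ^ 2 = ∑ i, u i ^ 2 := my_norm2_sq u
        have : ∑ i, (c⁻¹ • u) i ^ 2 = c⁻¹ ^ 2 * ∑ i, u i ^ 2 := by
          rw [Finset.mul_sum]
          refine Finset.sum_congr rfl fun i _ => ?_
          simp [smul_eq_mul]; ring
        rw [this, ← hcsq]
        field_simp
      · rw [Matrix.mulVec_smul, smul_dotProduct, dotProduct_smul]
        simp [smul_eq_mul, ha]; ring
    have hle : L ≤ c⁻¹ ^ 2 * a := csInf_le hbdd hmem
    have : L * c ^ 2 ≤ (c⁻¹ ^ 2 * a) * c ^ 2 :=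
      mul_le_mul_of_nonneg_right hle (sq_nonneg c)
    calc L * c ^ 2 ≤ (c⁻¹ ^ 2 * a) * c ^ 2 := this
      _ = a := by field_simp
  -- combine
  have haCc : a ≤ C * c := haB.trans hBC
  have hcCL : c ≤ C / L := by
    rw [le_div_iff₀ hLpos]
    nlinarith
  have hafin : a ≤ C ^ 2 / L := by
    calc a ≤ C * c := haCc
      _ ≤ C * (C / L) := mul_le_mul_of_nonneg_left hcCL hC0
      _ = C ^ 2 / L := by ring
  have hgoal_sq : norm2 (R.mulVec u) ^ 2 ≤ (C / Real.sqrt L) ^ 2 := by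
    rw [hRsq, div_pow, Real.sq_sqrt hLpos.le]
    exact hafin
  have h1 : 0 ≤ C / Real.sqrt L := div_nonneg hC0 (Real.sqrt_nonneg _)
  nlinarith [my_norm2_nonneg (R.mulVec u), hgoal_sq, h1]
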